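/- Let n ≥ 2 and 0 ≤ i ≤ n−1, and set D = ∂_w for w = s_{n−1}s_{n−2}···s_{i+1} (D is the identity when i = n−1). Then: (1) D maps the subring Z[X_1,…,X_n]^{S[i+2,n]} of polynomials symmetric in X_{i+2},…,X_n into the subring Z[X_1,…,X_n]^{S[i+1,n]} of polynomials symmetric in X_{i+1},…,X_n; (2) the powers X_{i+1}^0, X_{i+1}^1, …, X_{i+1}^{n−i−1} form a basis of Z[X_1,…,X_n]^{S[i+2,n]} as a module over Z[X_1,…,X_n]^{S[i+1,n]}; (3) for 0 ≤ j, m ≤ n−i−1 one has D( X_{i+1}^j · e_m(X_{i+2},…,X_n) ) = (−1)^j if j + m = n−i−1, and = 0 if j + m ≠ n−i−1; in particular the pairing (f,g) ↦ D(fg) on Z[X_1,…,X_n]^{S[i+2,n]} is a perfect Z[X_1,…,X_n]^{S[i+1,n]}-bilinear pairing, with {(−1)^j e_{n−i−1−j}(X_{i+2},…,X_n)}_{0≤j≤n−i−1} the basis dual to {X_{i+1}^j}_{0≤j≤n−i−1}. -/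

import Mathlib

open scoped BigOperators

namespace Dem

/-- The polynomial ring `ℤ[X_1, …, X_n]` (0-based variables). -/
abbrev R (n : ℕ) := MvPolynomial (Fin n) ℤ

/-- `D` is the family of Demazure (BGG) operators `∂_i` (0-based), characterized
by `(X_{i+1} - X_i) · ∂_i P = P - s_i(P)`. -/
def IsDemFamily {n : ℕ} (D : ℕ → R n → R n) : Prop :=
  ∀ (i : ℕ) (h : i + 1 < n) (P : R n),
    (MvPolynomial.X (⟨i + 1, h⟩ : Fin n) - MvPolynomial.X ⟨i, by omega⟩) * D i P
      = P - MvPolynomial.rename (Equiv.swap (⟨i, by omega⟩ : Fin n) ⟨i + 1, h⟩) P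

/-- `∂_w = ∂_{i_1} ∘ ⋯ ∘ ∂_{i_r}` for a word `l = [i_1, …, i_r]` (rightmost
applied first). -/
def applyWord {n : ℕ} (D : ℕ → R n → R n) (l : List ℕ) (P : R n) : R n :=
  l.foldr (fun i Q => D i Q) P

/-- The permutation of `Fin n` given by a word in the simple transpositions. -/
def permOfWord (n : ℕ) (l : List ℕ) : Equiv.Perm (Fin n) :=
  (l.map fun i =>
    if h : i + 1 < n then Equiv.swap (⟨i, by omega⟩ : Fin n) ⟨i + 1, h⟩ else 1).prod

/-- `l` is a reduced word for the permutation `w`. -/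
def IsReducedWordFor (n : ℕ) (l : List ℕ) (w : Equiv.Perm (Fin n)) : Prop :=
  (∀ i ∈ l, i + 1 < n) ∧ permOfWord n l = w ∧
    ∀ l' : List ℕ, (∀ i ∈ l', i + 1 < n) → permOfWord n l' = w → l.length ≤ l'.length

/-- The standard reduced word for the longest element of `S_m` (0-based). -/
def longWord (m : ℕ) : List ℕ :=
  (List.range m).foldr (fun j acc => (List.range j).reverse ++ acc) []

/-- The set of variables `X_{lo+1}, …, X_n` (0-based indices `≥ lo`). -/
def varsFrom (n lo : ℕ) : Finset (Fin n) :=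
  Finset.univ.filter fun a : Fin n => lo ≤ a.val

/-- The set of variables `X_1, …, X_m` (0-based indices `< m`). -/
def varsUpto (n m : ℕ) : Finset (Fin n) :=
  Finset.univ.filter fun a : Fin n => a.val < m

/-- Elementary symmetric polynomial of degree `m` in the variables of `s`. -/
noncomputable def eOn {n : ℕ} (s : Finset (Fin n)) (m : ℕ) : R n :=
  ∑ T ∈ s.powersetCard m, ∏ a ∈ T, MvPolynomial.X a

/-- Complete homogeneous symmetric polynomial of degree `j` in the variables of
`s`. -/
noncomputable def hOn {n : ℕ} (s : Finset (Fin n)) (j : ℕ) : R n :=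
  ∑ d ∈ s.sym j, (Multiset.map MvPolynomial.X (d : Multiset (Fin n))).prod

/-- `P` is symmetric in the variables with (0-based) index `≥ lo`. -/
def SymFrom {n : ℕ} (lo : ℕ) (P : R n) : Prop :=
  ∀ a b : Fin n, lo ≤ a.val → lo ≤ b.val →
    MvPolynomial.rename (Equiv.swap a b) P = P

/-- The monomial symmetric polynomial in the first `c` of the `n` variables,
attached to the exponent vector `w` (the sum of the distinct monomials in the
`S_c`-orbit of `X_1^{w_1} ⋯ X_c^{w_c}`). -/
noncomputable def msymBlock {n : ℕ} (c : ℕ) (w : Fin c → ℕ) : R n :=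
  ∑ g ∈ Finset.image
      (fun σ : Equiv.Perm (Fin c) =>
        fun i : Fin n => if h : i.val < c then w (σ ⟨i.val, h⟩) else 0)
      Finset.univ,
    ∏ i, MvPolynomial.X i ^ g i

end Dem

namespace Dem8

open Dem MvPolynomial

variable {n : ℕ}

lemma X_sub_ne {a b : Fin n} (h : a ≠ b) : (X a - X b : R n) ≠ 0 :=
  sub_ne_zero_of_ne (fun hh => h (MvPolynomial.X_injective hh))

lemma demEq {D : ℕ → R n → R n} (hD : IsDemFamily D) {l : ℕ} (hl : l + 1 < n)
    {P Q : R n}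
    (h : (X (⟨l + 1, hl⟩ : Fin n) - X ⟨l, by omega⟩) * Q
      = P - rename (Equiv.swap (⟨l, by omega⟩ : Fin n) ⟨l + 1, hl⟩) P) :
    D l P = Q := by
  have h2 := hD l hl P
  have hne : (X (⟨l + 1, hl⟩ : Fin n) - X ⟨l, by omega⟩ : R n) ≠ 0 :=
    X_sub_ne (by simp [Fin.ext_iff])
  exact mul_left_cancel₀ hne (h2.trans h.symm)

lemma D_add {D : ℕ → R n → R n} (hD : IsDemFamily D) {l : ℕ} (hl : l + 1 < n)
    (P Q : R n) : D l (P + Q) = D l P + D l Q := by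
  apply demEq hD hl
  rw [mul_add, hD l hl P, hD l hl Q, map_add]; ring

lemma D_zero {D : ℕ → R n → R n} (hD : IsDemFamily D) {l : ℕ} (hl : l + 1 < n) :
    D l 0 = 0 := by
  apply demEq hD hl; simp

lemma D_pull {D : ℕ → R n → R n} (hD : IsDemFamily D) {l : ℕ} (hl : l + 1 < n)
    {U : R n} (hU : rename (Equiv.swap (⟨l, by omega⟩ : Fin n) ⟨l + 1, hl⟩) U = U)
    (P : R n) : D l (U * P) = U * D l P := by
  apply demEq hD hl
  rw [map_mul, hU, ← mul_sub, ← hD l hl P]; ring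

/-- words: all entries of the standard word -/
def word (n k : ℕ) : List ℕ := (List.range (n - 1 - k)).reverse.map (· + k)

lemma mem_word {k l : ℕ} (h : l ∈ word n k) : k ≤ l ∧ l + 1 < n := by
  simp only [word, List.mem_map, List.mem_reverse, List.mem_range] at h
  obtain ⟨r, hr, rfl⟩ := h
  omega

lemma word_succ {k : ℕ} (hk : k + 1 < n) : word n k = word n (k + 1) ++ [k] := by
  unfold word
  have h1 : n - 1 - k = (n - 1 - (k+1)) + 1 := by omega
  rw [h1, List.range_succ_eq_map]
  simp only [List.reverse_cons, List.map_append, List.map_map, Function.comp_def,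
    List.map_reverse, List.reverse_append]
  congr 1
  · congr 1; apply List.map_congr_left; intro a _; omega
  · simp

lemma aw_cons (D : ℕ → R n → R n) (l : ℕ) (w : List ℕ) (P : R n) :
    applyWord D (l :: w) P = D l (applyWord D w P) := rfl

lemma aw_append (D : ℕ → R n → R n) (w1 w2 : List ℕ) (P : R n) :
    applyWord D (w1 ++ w2) P = applyWord D w1 (applyWord D w2 P) :=
  List.foldr_append

lemma aw_add {D : ℕ → R n → R n} (hD : IsDemFamily D) {w : List ℕ}
    (hw : ∀ l ∈ w, l + 1 < n) (P Q : R n) :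
    applyWord D w (P + Q) = applyWord D w P + applyWord D w Q := by
  induction w with
  | nil => rfl
  | cons a w ih =>
    have ha := hw a (List.mem_cons_self)
    rw [aw_cons, aw_cons, aw_cons, ih (fun l hl => hw l (List.mem_cons_of_mem _ hl)),
      D_add hD ha]

lemma aw_zero {D : ℕ → R n → R n} (hD : IsDemFamily D) {w : List ℕ}
    (hw : ∀ l ∈ w, l + 1 < n) :
    applyWord D w (0 : R n) = 0 := by
  induction w with
  | nil => rfl
  | cons a w ih =>
    rw [aw_cons, ih (fun l hl => hw l (List.mem_cons_of_mem _ hl)),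
      D_zero hD (hw a (List.mem_cons_self))]

lemma aw_pull {D : ℕ → R n → R n} (hD : IsDemFamily D) {w : List ℕ}
    (hw : ∀ l ∈ w, l + 1 < n) {U : R n}
    (hU : ∀ l (hl : l + 1 < n), l ∈ w →
      rename (Equiv.swap (⟨l, by omega⟩ : Fin n) ⟨l + 1, hl⟩) U = U)
    (P : R n) : applyWord D w (U * P) = U * applyWord D w P := by
  induction w with
  | nil => rfl
  | cons a w ih =>
    have ha := hw a (List.mem_cons_self)
    rw [aw_cons, aw_cons, ih (fun l hl => hw l (List.mem_cons_of_mem _ hl))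
      (fun l hl hm => hU l hl (List.mem_cons_of_mem _ hm)),
      D_pull hD ha (hU a ha (List.mem_cons_self))]

lemma aw_sum {D : ℕ → R n → R n} (hD : IsDemFamily D) {w : List ℕ}
    (hw : ∀ l ∈ w, l + 1 < n) {ι : Type*} (s : Finset ι) (f : ι → R n) :
    applyWord D w (∑ j ∈ s, f j) = ∑ j ∈ s, applyWord D w (f j) := by
  classical
  induction s using Finset.induction with
  | empty => simpa using aw_zero hD hw
  | insert _ _ hj ih =>
    rw [Finset.sum_insert hj, Finset.sum_insert hj, aw_add hD hw, ih]


open Dem MvPolynomial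

variable {n : ℕ} {s : Finset (Fin n)} {x : Fin n}

lemma eOn_zero (s : Finset (Fin n)) : eOn s 0 = 1 := by
  simp [eOn]

lemma eOn_empty (m : ℕ) : eOn (∅ : Finset (Fin n)) (m + 1) = 0 := by
  have : (∅ : Finset (Fin n)).powersetCard (m+1) = ∅ :=
    Finset.powersetCard_eq_empty.2 (by simp)
  simp [eOn, this]

lemma eOn_insert (hx : x ∉ s) (m : ℕ) :
    eOn (insert x s) (m + 1) = eOn s (m + 1) + X x * eOn s m := by
  classical
  rw [eOn, Finset.powersetCard_succ_insert hx]
  have hdisj : Disjoint (s.powersetCard (m + 1)) ((s.powersetCard m).image (insert x)) := by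
    rw [Finset.disjoint_left]
    intro T hT hT2
    simp only [Finset.mem_image] at hT2
    obtain ⟨U, hU, rfl⟩ := hT2
    have := Finset.mem_powersetCard.1 hT
    exact hx (this.1 (Finset.mem_insert_self x U))
  rw [Finset.sum_union hdisj]
  congr 1
  rw [Finset.sum_image, eOn, Finset.mul_sum]
  · apply Finset.sum_congr rfl
    intro T hT
    have hxT : x ∉ T := fun h => hx ((Finset.mem_powersetCard.1 hT).1 h)
    rw [Finset.prod_insert hxT]
  · intro T hT U hU h
    have hxT : x ∉ T := fun h2 => hx ((Finset.mem_powersetCard.1 hT).1 h2)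
    have hxU : x ∉ U := fun h2 => hx ((Finset.mem_powersetCard.1 hU).1 h2)
    rw [← Finset.erase_insert hxT, ← Finset.erase_insert hxU, h]

lemma hOn_zero (s : Finset (Fin n)) : hOn s 0 = 1 := by
  have : ((∅ : Sym (Fin n) 0) : Multiset (Fin n)) = 0 := rfl
  simp [hOn, this]

lemma hOn_empty (j : ℕ) : hOn (∅ : Finset (Fin n)) (j + 1) = 0 := by
  simp [hOn]

lemma hOn_singleton (a : Fin n) (j : ℕ) : hOn {a} j = X a ^ j := by
  simp [hOn, Finset.sym_singleton, Sym.coe_replicate, Multiset.map_replicate,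
    Multiset.prod_replicate]

lemma eOn_singleton (a : Fin n) (m : ℕ) :
    eOn {a} m = if m = 0 then 1 else if m = 1 then X a else 0 := by
  match m with
  | 0 => simp [eOn_zero]
  | 1 =>
    have : ({a} : Finset (Fin n)).powersetCard 1 = {{a}} := by
      have := Finset.powersetCard_self ({a} : Finset (Fin n))
      simpa using this
    simp [eOn, this]
  | (m+2) =>
    have : ({a} : Finset (Fin n)).powersetCard (m+2) = ∅ :=
      Finset.powersetCard_eq_empty.2 (by simp)
    simp [eOn, this]

lemma sym_insert_eq (hx : x ∉ s) (j : ℕ) :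
    (insert x s).sym (j + 1)
      = s.sym (j + 1) ∪ ((insert x s).sym j).image (Sym.cons x) := by
  classical
  ext d
  simp only [Finset.mem_union, Finset.mem_sym_iff, Finset.mem_image, Finset.mem_insert]
  constructor
  · intro h
    by_cases hxd : x ∈ d
    · right
      obtain ⟨t, rfl⟩ := Sym.exists_cons_of_mem hxd
      exact ⟨t, fun a ha => h a (Sym.mem_cons_of_mem ha), rfl⟩
    · left
      intro a ha
      rcases h a ha with h1 | h1
      · exact absurd (h1 ▸ ha) hxd
      · exact h1
  · rintro (h | ⟨t, ht, rfl⟩)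
    · exact fun a ha => Or.inr (h a ha)
    · intro a ha
      rcases Sym.mem_cons.1 ha with rfl | h1
      · exact Or.inl rfl
      · exact ht a h1

lemma hOn_insert (hx : x ∉ s) (j : ℕ) :
    hOn (insert x s) (j + 1) = hOn s (j + 1) + X x * hOn (insert x s) j := by
  classical
  rw [hOn, sym_insert_eq hx]
  have hdisj : Disjoint (s.sym (j + 1)) (((insert x s).sym j).image (Sym.cons x)) := by
    rw [Finset.disjoint_left]
    intro d hd hd2
    simp only [Finset.mem_image] at hd2
    obtain ⟨t, _, rfl⟩ := hd2
    exact hx (Finset.mem_sym_iff.1 hd x (Sym.mem_cons_self x t))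
  rw [Finset.sum_union hdisj]
  congr 1
  rw [Finset.sum_image, hOn, Finset.mul_sum]
  · apply Finset.sum_congr rfl
    intro t _
    rw [Sym.coe_cons, Multiset.map_cons, Multiset.prod_cons]
  · intro t _ u _ h
    exact (Sym.cons_inj_right x t u).1 h

/-- ℤ-indexed versions -/
noncomputable def eZ (s : Finset (Fin n)) (z : ℤ) : R n :=
  if 0 ≤ z then eOn s z.toNat else 0

noncomputable def hZ (s : Finset (Fin n)) (z : ℤ) : R n :=
  if 0 ≤ z then hOn s z.toNat else 0

lemma eZ_neg {z : ℤ} (h : z < 0) (s : Finset (Fin n)) : eZ s z = 0 := by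
  simp [eZ, not_le.2 h]

lemma hZ_neg {z : ℤ} (h : z < 0) (s : Finset (Fin n)) : hZ s z = 0 := by
  simp [hZ, not_le.2 h]

lemma eZ_coe (s : Finset (Fin n)) (m : ℕ) : eZ s (m : ℤ) = eOn s m := by
  simp [eZ]

lemma hZ_coe (s : Finset (Fin n)) (m : ℕ) : hZ s (m : ℤ) = hOn s m := by
  simp [hZ]

lemma eZ_zero (s : Finset (Fin n)) : eZ s 0 = 1 := by
  simpa using (eZ_coe s 0).trans (eOn_zero s)

lemma hZ_zero (s : Finset (Fin n)) : hZ s 0 = 1 := by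
  simpa using (hZ_coe s 0).trans (hOn_zero s)

lemma eZ_insert (hx : x ∉ s) (z : ℤ) :
    eZ (insert x s) z = eZ s z + X x * eZ s (z - 1) := by
  rcases lt_or_ge z 0 with h | h
  · rw [eZ_neg h, eZ_neg h, eZ_neg (by omega)]; ring
  · lift z to ℕ using h
    match z with
    | 0 =>
      rw [show ((0:ℕ):ℤ) = 0 from rfl, eZ_zero, eZ_zero, eZ_neg (by norm_num)]; ring
    | (m+1) =>
      have h1 : ((m : ℕ) + 1 : ℤ) - 1 = (m : ℤ) := by push_cast; ring
      rw [show ((m+1 : ℕ) : ℤ) = ((m:ℤ)+1) by push_cast; ring] at *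
      rw [show ((m:ℤ)+1) - 1 = (m:ℤ) by ring]
      rw [show ((m:ℤ)+1) = ((m+1 : ℕ) : ℤ) by push_cast; ring]
      rw [eZ_coe, eZ_coe, eZ_coe, eOn_insert hx]

lemma hZ_insert (hx : x ∉ s) (z : ℤ) :
    hZ (insert x s) z = hZ s z + X x * hZ (insert x s) (z - 1) := by
  rcases lt_or_ge z 0 with h | h
  · rw [hZ_neg h, hZ_neg h, hZ_neg (by omega)]; ring
  · lift z to ℕ using h
    match z with
    | 0 =>
      rw [show ((0:ℕ):ℤ) = 0 from rfl, hZ_zero, hZ_zero, hZ_neg (by norm_num)]; ring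
    | (m+1) =>
      rw [show ((m+1 : ℕ) : ℤ) = ((m:ℤ)+1) by push_cast; ring]
      rw [show ((m:ℤ)+1) - 1 = (m:ℤ) by ring]
      rw [show ((m:ℤ)+1) = ((m+1 : ℕ) : ℤ) by push_cast; ring]
      rw [hZ_coe, hZ_coe, hZ_coe, hOn_insert hx]

lemma hZ_expand (hx : x ∉ s) : ∀ (P : ℕ) (z : ℤ), z < P →
    hZ (insert x s) z = ∑ p ∈ Finset.range P, X x ^ p * hZ s (z - p) := by
  intro P
  induction P with
  | zero => intro z hz; simp [hZ_neg (by exact_mod_cast hz)]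
  | succ P ih =>
    intro z hz
    rw [Finset.sum_range_succ' (fun p => X x ^ p * hZ s (z - p))]
    have h0 : (X x : R n) ^ 0 * hZ s (z - (0:ℕ)) = hZ s z := by simp
    rw [h0, hZ_insert hx z]
    rcases lt_or_ge (z - 1) (P : ℤ) with h | h
    · rw [ih (z-1) h, Finset.mul_sum]
      rw [add_comm]
      congr 1
      apply Finset.sum_congr rfl
      intro p _
      have : z - 1 - p = z - (p+1 : ℕ) := by push_cast; ring
      rw [this, pow_succ]
      ring
    · omega

/-- the alternating e-h identity -/
lemma alt_eh (s : Finset (Fin n)) (d : ℕ) (hd : 1 ≤ d) :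
    ∑ u ∈ Finset.range (d + 1), (-1 : R n) ^ u * eZ s u * hZ s ((d : ℤ) - u) = 0 := by
  classical
  induction s using Finset.induction with
  | empty =>
    rw [Finset.sum_range_succ' (fun u => (-1 : R n) ^ u * eZ ∅ u * hZ ∅ ((d : ℤ) - u))]
    have hz : ∀ u ∈ Finset.range d,
        (-1 : R n) ^ (u+1) * eZ ∅ (u+1 : ℕ) * hZ ∅ ((d : ℤ) - (u+1 : ℕ)) = 0 := by
      intro u _
      rw [eZ_coe, eOn_empty]
      ring
    rw [Finset.sum_congr rfl hz, Finset.sum_const_zero]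
    simp only [pow_zero, one_mul, Nat.cast_zero, sub_zero]
    rw [eZ_zero, one_mul]
    have : (d : ℤ) = ((d : ℕ) : ℤ) := rfl
    rw [hZ_coe]
    match d, hd with
    | (d+1), _ => rw [hOn_empty]; ring
  | @insert x s hx ih =>
    have expand : ∀ u ∈ Finset.range (d+1),
        (-1 : R n) ^ u * eZ (insert x s) u * hZ (insert x s) ((d : ℤ) - u)
        = ((-1 : R n) ^ u * eZ s u * hZ s ((d : ℤ) - u)
            + X x * ((-1 : R n)^u * eZ s u * hZ (insert x s) ((d : ℤ) - 1 - u)))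
          + X x * ((-1 : R n)^u * eZ s ((u : ℤ) - 1) * hZ (insert x s) ((d : ℤ) - u)) := by
      intro u _
      rw [eZ_insert hx, hZ_insert hx]
      have : (d : ℤ) - u - 1 = (d:ℤ) - 1 - u := by ring
      rw [this]
      ring
    rw [Finset.sum_congr rfl expand, Finset.sum_add_distrib, Finset.sum_add_distrib, ih]
    rw [← Finset.mul_sum, ← Finset.mul_sum]
    have key : ∑ u ∈ Finset.range (d+1), (-1 : R n)^u * eZ s u * hZ (insert x s) ((d : ℤ) - 1 - u)
        = - ∑ u ∈ Finset.range (d+1), (-1 : R n)^u * eZ s ((u:ℤ) - 1) * hZ (insert x s) ((d : ℤ) - u) := by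
      rw [Finset.sum_range_succ (fun u => (-1 : R n)^u * eZ s u * hZ (insert x s) ((d : ℤ) - 1 - u))]
      rw [Finset.sum_range_succ' (fun u => (-1 : R n)^u * eZ s ((u:ℤ) - 1) * hZ (insert x s) ((d : ℤ) - u))]
      have h1 : hZ (insert x s) ((d:ℤ) - 1 - d) = 0 := hZ_neg (by omega) _
      have h2 : eZ s ((0:ℕ) - 1 : ℤ) = 0 := eZ_neg (by norm_num) _
      rw [h1, h2]
      simp only [mul_zero, zero_mul, add_zero, mul_zero]
      rw [← Finset.sum_neg_distrib]
      apply Finset.sum_congr rfl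
      intro u _
      have : ((u+1 : ℕ) : ℤ) - 1 = (u : ℤ) := by push_cast; ring
      rw [this]
      have : (d : ℤ) - (u+1 : ℕ) = (d:ℤ) - 1 - u := by push_cast; ring
      rw [this, pow_succ]
      ring
    rw [key]
    ring


open Dem MvPolynomial

variable {n : ℕ} {s : Finset (Fin n)} {x : Fin n}

lemma mem_varsFrom {k : ℕ} {a : Fin n} : a ∈ varsFrom n k ↔ k ≤ a.val := by
  simp [varsFrom]

lemma varsFrom_insert {k : ℕ} (hk : k < n) :
    varsFrom n k = insert (⟨k, hk⟩ : Fin n) (varsFrom n (k + 1)) := by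
  ext a
  simp only [mem_varsFrom, Finset.mem_insert, Fin.ext_iff]
  omega

lemma not_mem_varsFrom_succ {k : ℕ} (hk : k < n) :
    (⟨k, hk⟩ : Fin n) ∉ varsFrom n (k + 1) := by
  simp [mem_varsFrom]

lemma varsFrom_card : ∀ t k, k + t = n → (varsFrom n k).card = t := by
  intro t
  induction t with
  | zero =>
    intro k hk
    have : varsFrom n k = ∅ := by
      ext a; simp only [mem_varsFrom, Finset.notMem_empty, iff_false]; omega
    simp [this]
  | succ t ih =>
    intro k hk
    rw [varsFrom_insert (by omega : k < n), Finset.card_insert_of_notMem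
      (not_mem_varsFrom_succ _), ih (k+1) (by omega)]

lemma eOn_of_gt {m : ℕ} (h : s.card < m) : eOn s m = 0 := by
  rw [eOn, Finset.powersetCard_eq_empty.2 h, Finset.sum_empty]

/-- Vieta -/
lemma vieta (s : Finset (Fin n)) (Y : R n) :
    ∏ a ∈ s, (Y - X a)
      = ∑ m ∈ Finset.range (s.card + 1), (-1 : R n) ^ m * eZ s m * Y ^ (s.card - m) := by
  classical
  induction s using Finset.induction with
  | empty => simp [eZ_zero]
  | @insert x s hx ih =>
    rw [Finset.prod_insert hx, ih]
    have hc : (insert x s).card = s.card + 1 := Finset.card_insert_of_notMem hx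
    rw [hc]
    have expand : ∀ m ∈ Finset.range (s.card + 2),
        (-1 : R n) ^ m * eZ (insert x s) m * Y ^ (s.card + 1 - m)
        = (-1 : R n) ^ m * eZ s m * Y ^ (s.card + 1 - m)
          + X x * ((-1 : R n) ^ m * eZ s ((m : ℤ) - 1) * Y ^ (s.card + 1 - m)) := by
      intro m _
      rw [eZ_insert hx]; ring
    rw [Finset.sum_congr rfl expand, Finset.sum_add_distrib]
    have hA : ∑ m ∈ Finset.range (s.card + 2),
        (-1 : R n) ^ m * eZ s m * Y ^ (s.card + 1 - m)
        = Y * ∑ m ∈ Finset.range (s.card + 1), (-1 : R n) ^ m * eZ s m * Y ^ (s.card - m) := by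
      rw [Finset.sum_range_succ]
      have : eZ s ((s.card + 1 : ℕ) : ℤ) = 0 := by
        rw [eZ_coe]; exact eOn_of_gt (by omega)
      rw [this, Finset.mul_sum]
      simp only [mul_zero, zero_mul, mul_zero, add_zero]
      apply Finset.sum_congr rfl
      intro m hm
      have hm' : m ≤ s.card := by simpa [Nat.lt_succ_iff] using hm
      have : s.card + 1 - m = (s.card - m) + 1 := by omega
      rw [this, pow_succ]
      ring
    have hB : ∑ m ∈ Finset.range (s.card + 2),
        X x * ((-1 : R n) ^ m * eZ s ((m : ℤ) - 1) * Y ^ (s.card + 1 - m))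
        = - X x * ∑ m ∈ Finset.range (s.card + 1),
            (-1 : R n) ^ m * eZ s m * Y ^ (s.card - m) := by
      rw [Finset.sum_range_succ' (fun m => X x * ((-1 : R n) ^ m * eZ s ((m : ℤ) - 1)
        * Y ^ (s.card + 1 - m)))]
      have h0 : eZ s (((0:ℕ) : ℤ) - 1) = 0 := eZ_neg (by norm_num) _
      have hshift' : ∀ k ∈ Finset.range (s.card + 1),
          X x * ((-1 : R n) ^ (k+1) * eZ s (((k+1 : ℕ) : ℤ) - 1) * Y ^ (s.card + 1 - (k+1)))
          = -(X x * ((-1 : R n) ^ k * eZ s (k : ℤ) * Y ^ (s.card - k))) := by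
        intro k _
        have h1 : ((k + 1 : ℕ) : ℤ) - 1 = (k : ℤ) := by push_cast; ring
        have h2 : s.card + 1 - (k + 1) = s.card - k := by omega
        rw [h1, h2, pow_succ]
        ring
      rw [Finset.sum_congr rfl hshift', Finset.sum_neg_distrib, ← Finset.mul_sum, h0]
      ring
    rw [hA, hB]
    ring

/-- inverse expansion of eOn s in terms of eOn (insert x s) and powers of x -/
lemma eInv (hx : x ∉ s) (m : ℕ) :
    eOn s m = ∑ t ∈ Finset.range (m + 1),
      (-1 : R n) ^ t * X x ^ t * eZ (insert x s) ((m : ℤ) - t) := by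
  induction m with
  | zero => simp [eOn_zero, eZ_zero]
  | succ m ih =>
    rw [Finset.sum_range_succ' (fun t => (-1 : R n) ^ t * X x ^ t
      * eZ (insert x s) (((m+1 : ℕ) : ℤ) - t))]
    have hshift : ∀ t ∈ Finset.range (m + 1),
        (-1 : R n) ^ (t+1) * X x ^ (t+1) * eZ (insert x s) (((m+1 : ℕ) : ℤ) - (t+1 : ℕ))
        = - (X x * ((-1 : R n) ^ t * X x ^ t * eZ (insert x s) ((m : ℕ) - (t : ℤ)))) := by
      intro t _
      have : ((m+1 : ℕ) : ℤ) - ((t+1 : ℕ) : ℤ) = (m : ℤ) - t := by push_cast; ring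
      rw [this, pow_succ, pow_succ]
      ring
    rw [Finset.sum_congr rfl hshift, Finset.sum_neg_distrib, ← Finset.mul_sum, ← ih]
    simp only [pow_zero, one_mul, Nat.cast_zero, sub_zero]
    have : eZ (insert x s) ((m+1 : ℕ) : ℤ) = eOn s (m+1) + X x * eOn s m := by
      rw [eZ_coe, eOn_insert hx]
    rw [this]
    ring

/-- rename invariance of eOn under a permutation preserving s -/
lemma rename_eOn (σ : Equiv.Perm (Fin n)) (h : ∀ a ∈ s, σ a ∈ s) (m : ℕ) :
    rename (σ : Fin n → Fin n) (eOn s m) = eOn s m := by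
  classical
  have hs : s.image (σ : Fin n → Fin n) = s := by
    apply Finset.eq_of_subset_of_card_le
    · intro a ha
      obtain ⟨b, hb, rfl⟩ := Finset.mem_image.1 ha
      exact h b hb
    · rw [Finset.card_image_of_injective _ σ.injective]
  rw [eOn, map_sum]
  apply Finset.sum_nbij' (i := fun T => T.image (σ : Fin n → Fin n))
    (j := fun T => T.image (σ.symm : Fin n → Fin n))
  · intro T hT
    rw [Finset.mem_powersetCard] at hT ⊢
    constructor
    · intro a ha
      obtain ⟨b, hb, rfl⟩ := Finset.mem_image.1 ha
      rw [← hs]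
      exact Finset.mem_image_of_mem _ (hT.1 hb)
    · rw [Finset.card_image_of_injective _ σ.injective, hT.2]
  · intro T hT
    rw [Finset.mem_powersetCard] at hT ⊢
    constructor
    · intro a ha
      obtain ⟨b, hb, rfl⟩ := Finset.mem_image.1 ha
      have hb' : b ∈ s := hT.1 hb
      rw [← hs] at hb'
      obtain ⟨c, hc, rfl⟩ := Finset.mem_image.1 hb'
      simpa using hc
    · rw [Finset.card_image_of_injective _ σ.symm.injective, hT.2]
  · intro T _
    rw [Finset.image_image]
    simp
  · intro T _
    rw [Finset.image_image]
    simp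
  · intro T _
    rw [map_prod]
    simp only [rename_X]
    exact (Finset.prod_image (fun a _ b _ hab => σ.injective hab)).symm


open Dem MvPolynomial

variable {n : ℕ} {s : Finset (Fin n)} {x : Fin n} {k : ℕ}

lemma symFrom_C (k : ℕ) (c : ℤ) : SymFrom k (C c : R n) := by
  intro a b _ _; simp

lemma symFrom_zero (k : ℕ) : SymFrom k (0 : R n) := by
  intro a b _ _; simp

lemma symFrom_one (k : ℕ) : SymFrom k (1 : R n) := by
  intro a b _ _; simp

lemma symFrom_add {P Q : R n} (hP : SymFrom k P) (hQ : SymFrom k Q) :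
    SymFrom k (P + Q) := by
  intro a b ha hb; rw [map_add, hP a b ha hb, hQ a b ha hb]

lemma symFrom_mul {P Q : R n} (hP : SymFrom k P) (hQ : SymFrom k Q) :
    SymFrom k (P * Q) := by
  intro a b ha hb; rw [map_mul, hP a b ha hb, hQ a b ha hb]

lemma symFrom_neg {P : R n} (hP : SymFrom k P) : SymFrom k (-P) := by
  intro a b ha hb; rw [map_neg, hP a b ha hb]

lemma symFrom_sum {ι : Type*} (t : Finset ι) (f : ι → R n)
    (h : ∀ j ∈ t, SymFrom k (f j)) : SymFrom k (∑ j ∈ t, f j) := by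
  intro a b ha hb
  rw [map_sum]
  apply Finset.sum_congr rfl
  intro j hj
  exact h j hj a b ha hb

lemma symFrom_X {a : Fin n} (h : a.val < k) : SymFrom k (X a : R n) := by
  intro c d hc hd
  rw [rename_X, Equiv.swap_apply_of_ne_of_ne]
  · rintro rfl; omega
  · rintro rfl; omega

lemma symFrom_eOn {k' : ℕ} (h : k' ≤ k) (m : ℕ) :
    SymFrom k (eOn (varsFrom n k') m) := by
  intro a b ha hb
  apply rename_eOn
  intro c hc
  rw [mem_varsFrom] at hc ⊢
  rcases eq_or_ne c a with rfl | hca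
  · rw [Equiv.swap_apply_left]; omega
  rcases eq_or_ne c b with rfl | hcb
  · rw [Equiv.swap_apply_right]; omega
  · rw [Equiv.swap_apply_of_ne_of_ne hca hcb]; exact hc

lemma symFrom_eZ {k' : ℕ} (h : k' ≤ k) (z : ℤ) :
    SymFrom k (eZ (varsFrom n k') z) := by
  unfold eZ
  split
  · exact symFrom_eOn h _
  · exact symFrom_zero k

/-- Vandermonde elimination -/
lemma vandermonde_kill (hk : k < n) (c : Fin (n - k) → R n)
    (h : ∀ b : Fin n, k ≤ b.val → ∑ j : Fin (n - k), c j * (X b : R n) ^ (j : ℕ) = 0) :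
    ∀ j, c j = 0 := by
  classical
  set K := FractionRing (R n)
  set φ := algebraMap (R n) K with hφ
  have hinj : Function.Injective φ := IsFractionRing.injective (R n) K
  set v : Fin (n - k) → K := fun l => φ (X ⟨k + l, by omega⟩) with hv
  have hvinj : Function.Injective v := by
    intro a b hab
    have := hinj hab
    have := MvPolynomial.X_injective this
    simpa [Fin.ext_iff] using this
  set M := Matrix.vandermonde v with hM
  have hdet : M.det ≠ 0 := Matrix.det_vandermonde_ne_zero_iff.2 hvinj
  have hMv : M.mulVec (fun j => φ (c j)) = 0 := by
    funext l
    rw [Matrix.mulVec]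
    show ∑ j, M l j * φ (c j) = 0
    have : ∀ j, M l j * φ (c j) = φ (c j * X (⟨k + l, by omega⟩ : Fin n) ^ (j : ℕ)) := by
      intro j
      rw [map_mul, map_pow]
      show v l ^ (j : ℕ) * φ (c j) = _
      rw [hv]
      ring
    rw [Finset.sum_congr rfl (fun j _ => this j), ← map_sum, h ⟨k + l, by omega⟩ (by simp),
      map_zero]
  have hker : (fun j => φ (c j)) = 0 := by
    have hu : IsUnit M := (Matrix.isUnit_iff_isUnit_det M).2 (Ne.isUnit hdet)
    have := Matrix.mulVec_injective_iff_isUnit.2 hu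
    apply this
    rw [hMv, Matrix.mulVec_zero]
  intro j
  apply hinj
  have := congrFun hker j
  simpa using this


open Dem MvPolynomial Equiv

variable {n : ℕ} {s : Finset (Fin n)} {x : Fin n} {k : ℕ}

lemma rename_swap_eOn_out {a b : Fin n} (ha : a ∉ s) (hb : b ∉ s) (m : ℕ) :
    rename (Equiv.swap a b : Fin n → Fin n) (eOn s m) = eOn s m := by
  apply rename_eOn
  intro c hc
  have hca : c ≠ a := by rintro rfl; exact ha hc
  have hcb : c ≠ b := by rintro rfl; exact hb hc
  rw [Equiv.swap_apply_of_ne_of_ne hca hcb]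
  exact hc

lemma rename_swap_eZ_out {a b : Fin n} (ha : a ∉ s) (hb : b ∉ s) (z : ℤ) :
    rename (Equiv.swap a b : Fin n → Fin n) (eZ s z) = eZ s z := by
  unfold eZ
  split
  · exact rename_swap_eOn_out ha hb _
  · exact map_zero _

lemma rename_swap_X_pow {l : ℕ} (hl : l + 1 < n) {a : Fin n}
    (h1 : a.val ≠ l) (h2 : a.val ≠ l + 1) (p : ℕ) :
    rename (Equiv.swap (⟨l, by omega⟩ : Fin n) ⟨l + 1, hl⟩ : Fin n → Fin n)
      ((X a : R n) ^ p) = X a ^ p := by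
  rw [map_pow, rename_X, Equiv.swap_apply_of_ne_of_ne]
  · simp [Fin.ext_iff]; omega
  · simp [Fin.ext_iff]; omega

lemma eZ_singleton_ge2 {a : Fin n} {z : ℤ} (h : 2 ≤ z) : eZ {a} z = 0 := by
  rw [eZ, if_pos (by omega), eOn_singleton]
  have h1 : z.toNat ≠ 0 := by omega
  have h2 : z.toNat ≠ 1 := by omega
  simp [h1, h2]

lemma eZ_singleton_one (a : Fin n) : eZ {a} 1 = X a := by
  rw [show (1 : ℤ) = ((1:ℕ) : ℤ) from rfl, eZ_coe, eOn_singleton]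
  simp

lemma hZ_singleton_coe (a : Fin n) (r : ℕ) : hZ {a} (r : ℤ) = X a ^ r := by
  rw [hZ_coe, hOn_singleton]

lemma box (f : ℕ → ℕ → R n) (M P : ℕ) :
    ∑ u ∈ Finset.range (M+1), ∑ p ∈ Finset.range (P+1), f u p
    = (∑ u ∈ Finset.range M, ∑ p ∈ Finset.range P, f (u+1) (p+1))
      + (∑ u ∈ Finset.range M, f (u+1) 0) + ∑ p ∈ Finset.range (P+1), f 0 p := by
  rw [Finset.sum_range_succ' (fun u => ∑ p ∈ Finset.range (P+1), f u p) M]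
  congr 1
  rw [← Finset.sum_add_distrib]
  apply Finset.sum_congr rfl
  intro u _
  rw [Finset.sum_range_succ' (fun p => f (u+1) p) P]

/-- The main computation. -/
lemma claim {D : ℕ → R n → R n} (hD : IsDemFamily D) :
    ∀ t k (hkt : k + t + 1 = n), ∀ j m : ℕ,
    applyWord D (word n k) (X (⟨k, by omega⟩ : Fin n) ^ j * eOn (varsFrom n (k+1)) m)
    = (-1 : R n) ^ t * ∑ u ∈ Finset.range (m+1),
        (-1 : R n) ^ u * eZ (varsFrom n k) ((m : ℤ) - u) * hZ (varsFrom n k) ((j : ℤ) + u - t) := by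
  intro t
  induction t with
  | zero =>
    intro k hkt j m
    have hn : n = k + 1 := by omega
    subst hn
    have hword : word (k+1) k = [] := by simp [word]
    have hV1 : varsFrom (k+1) (k+1) = ∅ := by
      ext a; simp only [mem_varsFrom, Finset.notMem_empty, iff_false]; omega
    have hV0 : varsFrom (k+1) k = {⟨k, by omega⟩} := by
      ext a; simp only [mem_varsFrom, Finset.mem_singleton, Fin.ext_iff]; omega
    rw [hword, hV1, hV0]
    show X (⟨k, by omega⟩ : Fin (k+1)) ^ j * eOn ∅ m = _
    set a : Fin (k+1) := ⟨k, by omega⟩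
    simp only [Nat.cast_zero, sub_zero, pow_zero, one_mul]
    match m with
    | 0 =>
      rw [eOn_zero, mul_one, zero_add, Finset.range_one, Finset.sum_singleton]
      simp only [Nat.cast_zero, sub_zero, add_zero, pow_zero, one_mul]
      rw [eZ_zero, hZ_singleton_coe]
      ring
    | (m+1) =>
      rw [eOn_empty, mul_zero]
      symm
      rw [Finset.sum_range_succ, Finset.sum_range_succ]
      have hz : ∀ u ∈ Finset.range m,
          (-1 : R (k+1)) ^ u * eZ {a} (((m+1 : ℕ) : ℤ) - u) * hZ {a} ((j : ℤ) + u) = 0 := by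
        intro u hu
        rw [eZ_singleton_ge2 (by simp at hu; omega)]
        ring
      rw [Finset.sum_congr rfl hz, Finset.sum_const_zero]
      have h1 : ((m+1 : ℕ) : ℤ) - (m : ℤ) = 1 := by push_cast; ring
      have h2 : ((m+1 : ℕ) : ℤ) - ((m+1 : ℕ) : ℤ) = 0 := by ring
      rw [h1, h2, eZ_singleton_one, eZ_zero]
      have h3 : (j : ℤ) + (m : ℤ) = ((j + m : ℕ) : ℤ) := by push_cast; ring
      have h4 : (j : ℤ) + ((m+1 : ℕ) : ℤ) = ((j + m + 1 : ℕ) : ℤ) := by push_cast; ring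
      rw [h3, h4, hZ_singleton_coe, hZ_singleton_coe, pow_succ, pow_succ]
      ring
  | succ t ih =>
    intro k hkt j m
    have hkn : k < n := by omega
    have hk1 : k + 1 < n := by omega
    have hw1 : ∀ l ∈ word n (k+1), l + 1 < n := fun l hl => (mem_word hl).2
    have hxV1 : (⟨k, hkn⟩ : Fin n) ∉ varsFrom n (k+1) := by simp [mem_varsFrom]
    have hxV2 : (⟨k, hkn⟩ : Fin n) ∉ varsFrom n (k+2) := by simp [mem_varsFrom]
    have hyV2 : (⟨k+1, hk1⟩ : Fin n) ∉ varsFrom n (k+2) := by simp [mem_varsFrom]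
    -- the two one-step Demazure values
    have hDxj : D k ((X (⟨k, hkn⟩ : Fin n)) ^ j)
        = -∑ a ∈ Finset.range j, (X (⟨k, hkn⟩ : Fin n)) ^ a * (X (⟨k+1, hk1⟩ : Fin n)) ^ (j-1-a) := by
      apply demEq hD hk1
      rw [map_pow, rename_X, Equiv.swap_apply_left]
      linear_combination (geom_sum₂_mul (X (⟨k, hkn⟩ : Fin n) : R n) (X (⟨k+1, hk1⟩ : Fin n)) j)
    have hDxjy : D k ((X (⟨k, hkn⟩ : Fin n)) ^ j * X (⟨k+1, hk1⟩ : Fin n))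
        = (X (⟨k+1, hk1⟩ : Fin n)) ^ j - X (⟨k+1, hk1⟩ : Fin n)
            * ∑ a ∈ Finset.range j, (X (⟨k, hkn⟩ : Fin n)) ^ a * (X (⟨k+1, hk1⟩ : Fin n)) ^ (j-1-a) := by
      apply demEq hD hk1
      rw [map_mul, map_pow, rename_X, rename_X, Equiv.swap_apply_left, Equiv.swap_apply_right]
      linear_combination (X (⟨k+1, hk1⟩ : Fin n) : R n)
        * (geom_sum₂_mul (X (⟨k, hkn⟩ : Fin n) : R n) (X (⟨k+1, hk1⟩ : Fin n)) j)
    -- decomposition of the argument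
    have hsplit : eOn (varsFrom n (k+1)) m
        = eZ (varsFrom n (k+2)) (m : ℤ) + X (⟨k+1, hk1⟩ : Fin n) * eZ (varsFrom n (k+2)) ((m:ℤ)-1) := by
      rw [← eZ_coe, varsFrom_insert hk1, eZ_insert hyV2]
    have harg : (X (⟨k, hkn⟩ : Fin n)) ^ j * eOn (varsFrom n (k+1)) m
        = eZ (varsFrom n (k+2)) (m : ℤ) * (X (⟨k, hkn⟩ : Fin n)) ^ j
          + eZ (varsFrom n (k+2)) ((m:ℤ)-1) * ((X (⟨k, hkn⟩ : Fin n)) ^ j * X (⟨k+1, hk1⟩ : Fin n)) := by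
      rw [hsplit]; ring
    have hSD : D k ((X (⟨k, hkn⟩ : Fin n)) ^ j * eOn (varsFrom n (k+1)) m)
        = (∑ a ∈ Finset.range j, (X (⟨k, hkn⟩ : Fin n)) ^ a *
            ((-1) * ((X (⟨k+1, hk1⟩ : Fin n)) ^ (j-1-a) * eZ (varsFrom n (k+2)) (m : ℤ))
              + (-1) * ((X (⟨k+1, hk1⟩ : Fin n)) ^ ((j-1-a)+1) * eZ (varsFrom n (k+2)) ((m:ℤ)-1))))
          + (X (⟨k+1, hk1⟩ : Fin n)) ^ j * eZ (varsFrom n (k+2)) ((m:ℤ)-1) := by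
      rw [harg, D_add hD hk1, D_pull hD hk1 (rename_swap_eZ_out hxV2 hyV2 _),
        D_pull hD hk1 (rename_swap_eZ_out hxV2 hyV2 _), hDxj, hDxjy]
      have h2a : ∀ a ∈ Finset.range j, (X (⟨k, hkn⟩ : Fin n)) ^ a *
            ((-1) * ((X (⟨k+1, hk1⟩ : Fin n)) ^ (j-1-a) * eZ (varsFrom n (k+2)) (m : ℤ))
              + (-1) * ((X (⟨k+1, hk1⟩ : Fin n)) ^ ((j-1-a)+1) * eZ (varsFrom n (k+2)) ((m:ℤ)-1)))
          = -(eZ (varsFrom n (k+2)) (m : ℤ) * ((X (⟨k, hkn⟩ : Fin n)) ^ a * (X (⟨k+1, hk1⟩ : Fin n)) ^ (j-1-a)))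
            + -(eZ (varsFrom n (k+2)) ((m:ℤ)-1) * (X (⟨k+1, hk1⟩ : Fin n)
                * ((X (⟨k, hkn⟩ : Fin n)) ^ a * (X (⟨k+1, hk1⟩ : Fin n)) ^ (j-1-a)))) := by
        intro a _
        rw [pow_succ]; ring
      rw [Finset.sum_congr rfl h2a, Finset.sum_add_distrib, Finset.sum_neg_distrib,
        Finset.sum_neg_distrib, ← Finset.mul_sum, ← Finset.mul_sum, ← Finset.mul_sum]
      ring
    -- IH in the two needed forms
    have hPhi : ∀ b : ℕ, applyWord D (word n (k+1))
        ((X (⟨k+1, hk1⟩ : Fin n)) ^ b * eZ (varsFrom n (k+2)) (m : ℤ))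
        = (-1 : R n) ^ t * ∑ u ∈ Finset.range (m+1),
            (-1 : R n) ^ u * eZ (varsFrom n (k+1)) ((m : ℤ) - u)
              * hZ (varsFrom n (k+1)) ((b : ℤ) + u - t) := by
      intro b
      rw [eZ_coe]
      exact ih (k+1) (by omega) b m
    have hPhi' : ∀ b : ℕ, applyWord D (word n (k+1))
        ((X (⟨k+1, hk1⟩ : Fin n)) ^ b * eZ (varsFrom n (k+2)) ((m : ℤ) - 1))
        = (-1 : R n) ^ t * ∑ u ∈ Finset.range m,
            (-1 : R n) ^ u * eZ (varsFrom n (k+1)) ((m : ℤ) - 1 - u)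
              * hZ (varsFrom n (k+1)) ((b : ℤ) + u - t) := by
      intro b
      match m with
      | 0 =>
        have h0 : ((0:ℕ):ℤ) - 1 = (-1 : ℤ) := by norm_num
        rw [h0, eZ_neg (show (-1:ℤ) < 0 by norm_num) (varsFrom n (k+2)), mul_zero,
          aw_zero hD hw1, Finset.range_zero, Finset.sum_empty, mul_zero]
      | (m+1) =>
        rw [show ((m+1:ℕ):ℤ) - 1 = ((m:ℕ):ℤ) by push_cast; ring, eZ_coe,
          ih (k+1) (by omega) b m]
    -- rewrite LHS
    rw [word_succ hk1, aw_append]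
    show applyWord D (word n (k+1)) (D k ((X (⟨k, hkn⟩ : Fin n)) ^ j * eOn (varsFrom n (k+1)) m)) = _
    rw [hSD, aw_add hD hw1, aw_sum hD hw1, hPhi' j]
    -- per-a computation
    have hUneg : ∀ l (hl : l + 1 < n), l ∈ word n (k+1) →
        rename (Equiv.swap (⟨l, by omega⟩ : Fin n) ⟨l+1, hl⟩) (-1 : R n) = -1 := by
      intro l hl _
      rw [map_neg, map_one]
    have hterm : ∀ a ∈ Finset.range j,
        applyWord D (word n (k+1)) ((X (⟨k, hkn⟩ : Fin n)) ^ a *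
            ((-1) * ((X (⟨k+1, hk1⟩ : Fin n)) ^ (j-1-a) * eZ (varsFrom n (k+2)) (m : ℤ))
              + (-1) * ((X (⟨k+1, hk1⟩ : Fin n)) ^ ((j-1-a)+1) * eZ (varsFrom n (k+2)) ((m:ℤ)-1))))
        = (-1 : R n) ^ (t+1) * (eZ (varsFrom n (k+1)) (m:ℤ)
            * ((X (⟨k, hkn⟩ : Fin n)) ^ a * hZ (varsFrom n (k+1)) ((j:ℤ) - ↑(t+1) - ↑a))) := by
      intro a ha
      have ha' : a < j := Finset.mem_range.1 ha
      have hUx : ∀ l (hl : l + 1 < n), l ∈ word n (k+1) →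
          rename (Equiv.swap (⟨l, by omega⟩ : Fin n) ⟨l+1, hl⟩) ((X (⟨k, hkn⟩ : Fin n)) ^ a : R n)
            = (X (⟨k, hkn⟩ : Fin n)) ^ a := by
        intro l hl hmem
        have := (mem_word hmem).1
        exact rename_swap_X_pow hl (by simp; omega) (by simp; omega) a
      rw [aw_pull hD hw1 hUx, aw_add hD hw1, aw_pull hD hw1 hUneg, aw_pull hD hw1 hUneg,
        hPhi (j-1-a), hPhi' ((j-1-a)+1)]
      have htel := Finset.sum_range_succ' (fun u => (-1 : R n) ^ u
        * eZ (varsFrom n (k+1)) ((m : ℤ) - u)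
        * hZ (varsFrom n (k+1)) (((j-1-a : ℕ) : ℤ) + u - t)) m
      rw [htel]
      have hflip : ∑ u ∈ Finset.range m, (-1 : R n) ^ (u+1)
            * eZ (varsFrom n (k+1)) ((m : ℤ) - (u+1:ℕ))
            * hZ (varsFrom n (k+1)) (((j-1-a : ℕ) : ℤ) + ((u+1:ℕ):ℤ) - t)
          = -(∑ u ∈ Finset.range m, (-1 : R n) ^ u * eZ (varsFrom n (k+1)) ((m : ℤ) - 1 - u)
              * hZ (varsFrom n (k+1)) ((((j-1-a)+1 : ℕ) : ℤ) + u - t)) := by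
        rw [← Finset.sum_neg_distrib]
        apply Finset.sum_congr rfl
        intro u _
        have e1 : (m:ℤ) - ((u+1:ℕ):ℤ) = (m:ℤ) - 1 - u := by push_cast; ring
        have e2 : ((j-1-a : ℕ) : ℤ) + ((u+1:ℕ):ℤ) - t = (((j-1-a)+1 : ℕ) : ℤ) + u - t := by
          push_cast; ring
        rw [e1, e2, pow_succ]
        ring
      rw [hflip]
      have e3 : (m:ℤ) - ((0:ℕ):ℤ) = (m:ℤ) := by push_cast; ring
      have e4 : ((j-1-a : ℕ) : ℤ) + ((0:ℕ):ℤ) - (t:ℤ) = (j:ℤ) - ↑(t+1) - ↑a := by omega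
      rw [e3, e4]
      ring
    rw [Finset.sum_congr rfl hterm]
    -- now pure algebra on the two sides
    have hB : (-1 : R n) ^ (t+1) * ∑ u ∈ Finset.range (m+1),
            (-1 : R n) ^ u * eZ (varsFrom n k) ((m : ℤ) - u)
              * hZ (varsFrom n k) ((j : ℤ) + u - ↑(t+1))
        = (-1 : R n) ^ (t+1) * (eZ (varsFrom n (k+1)) (m:ℤ)
            * (∑ a ∈ Finset.range j, (X (⟨k, hkn⟩ : Fin n)) ^ a
                * hZ (varsFrom n (k+1)) ((j:ℤ) - ↑(t+1) - ↑a))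
            - ∑ u ∈ Finset.range m, (-1 : R n) ^ u * eZ (varsFrom n (k+1)) ((m : ℤ) - 1 - u)
              * hZ (varsFrom n (k+1)) ((j : ℤ) + u - t)) := by
      congr 1
      set F : ℕ → ℕ → R n := fun u p => (-1 : R n) ^ u * eZ (varsFrom n (k+1)) ((m:ℤ) - u)
        * ((X (⟨k, hkn⟩ : Fin n)) ^ p * hZ (varsFrom n (k+1)) ((j:ℤ) + u - ↑(t+1) - p)) with hF
      have hu1 : ∀ u ∈ Finset.range (m+1),
          (-1 : R n) ^ u * eZ (varsFrom n k) ((m : ℤ) - u)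
              * hZ (varsFrom n k) ((j : ℤ) + u - ↑(t+1))
          = (∑ p ∈ Finset.range (j+m+1), F u p)
            + -(∑ p ∈ Finset.range (j+m+1), F (u+1) (p+1)) := by
        intro u hu
        have hu' : u < m + 1 := Finset.mem_range.1 hu
        rw [varsFrom_insert hkn, eZ_insert hxV1,
          hZ_expand hxV1 (j+m+1) _ (by omega)]
        rw [Finset.mul_sum, ← Finset.sum_neg_distrib, ← Finset.sum_add_distrib]
        apply Finset.sum_congr rfl
        intro p _
        simp only [hF]
        have i1 : (m:ℤ) - ((u+1:ℕ):ℤ) = (m:ℤ) - ↑u - 1 := by push_cast; ring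
        have i2 : (j:ℤ) + ((u+1:ℕ):ℤ) - ↑(t+1) - ((p+1:ℕ):ℤ) = (j:ℤ) + ↑u - ↑(t+1) - ↑p := by
          push_cast; ring
        rw [i1, i2, pow_succ, pow_succ]
        ring
      rw [Finset.sum_congr rfl hu1, Finset.sum_add_distrib, Finset.sum_neg_distrib]
      have hext : ∑ u ∈ Finset.range (m+1), ∑ p ∈ Finset.range (j+m+1), F u p
          = ∑ u ∈ Finset.range (m+2), ∑ p ∈ Finset.range (j+m+2), F u p := by
        symm
        rw [Finset.sum_range_succ]
        have hrow : ∑ p ∈ Finset.range (j+m+2), F (m+1) p = 0 := by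
          apply Finset.sum_eq_zero
          intro p _
          simp only [hF]
          rw [eZ_neg (by push_cast; omega) (varsFrom n (k+1))]
          ring
        rw [hrow, add_zero]
        apply Finset.sum_congr rfl
        intro u hu
        have hu' : u < m + 1 := Finset.mem_range.1 hu
        rw [Finset.sum_range_succ]
        have hcol : F u (j+m+1) = 0 := by
          simp only [hF]
          rw [hZ_neg (by push_cast; omega) (varsFrom n (k+1))]
          ring
        rw [hcol, add_zero]
      rw [hext, box F (m+1) (j+m+1)]
      have hcol0 : ∑ u ∈ Finset.range (m+1), F (u+1) 0
          = -∑ u ∈ Finset.range m, (-1:R n)^u * eZ (varsFrom n (k+1)) ((m:ℤ)-1-u)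
              * hZ (varsFrom n (k+1)) ((j:ℤ)+u-t) := by
        rw [Finset.sum_range_succ]
        have hz0 : F (m+1) 0 = 0 := by
          simp only [hF]
          rw [eZ_neg (by push_cast; omega) (varsFrom n (k+1))]
          ring
        rw [hz0, add_zero, ← Finset.sum_neg_distrib]
        apply Finset.sum_congr rfl
        intro u _
        simp only [hF]
        have i1 : (m:ℤ) - ((u+1:ℕ):ℤ) = (m:ℤ)-1-↑u := by push_cast; ring
        have i2 : (j:ℤ) + ((u+1:ℕ):ℤ) - ↑(t+1) - ((0:ℕ):ℤ) = (j:ℤ)+↑u-↑t := by push_cast; ring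
        rw [i1, i2, pow_succ]
        ring
      have hrow0 : ∑ p ∈ Finset.range (j+m+2), F 0 p
          = eZ (varsFrom n (k+1)) (m:ℤ) * ∑ a ∈ Finset.range j,
              (X (⟨k, hkn⟩:Fin n))^a * hZ (varsFrom n (k+1)) ((j:ℤ) - ↑(t+1) - ↑a) := by
        have htr : ∑ p ∈ Finset.range (j+m+2), F 0 p = ∑ p ∈ Finset.range j, F 0 p := by
          symm
          apply Finset.sum_subset (Finset.range_subset_range.2 (by omega))
          intro p hp hnp
          have hp1 : j ≤ p := by simpa using hnp
          simp only [hF]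
          rw [hZ_neg (by push_cast; omega) (varsFrom n (k+1))]
          ring
        rw [htr, Finset.mul_sum]
        apply Finset.sum_congr rfl
        intro p _
        simp only [hF]
        have i1 : (m:ℤ) - ((0:ℕ):ℤ) = (m:ℤ) := by push_cast; ring
        have i2 : (j:ℤ) + ((0:ℕ):ℤ) - ↑(t+1) - ↑p = (j:ℤ) - ↑(t+1) - ↑p := by push_cast; ring
        rw [i1, i2, pow_zero, one_mul]
      rw [hcol0, hrow0]
      ring
    rw [hB]
    rw [← Finset.mul_sum, ← Finset.mul_sum]
    ring


open Dem MvPolynomial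

variable {n : ℕ} {k : ℕ}

/-- generators: small variables and the elementary symmetric polynomials in the block -/
def Sgen (n k : ℕ) : Set (R n) :=
  {P | (∃ a : Fin n, a.val < k ∧ P = X a) ∨ (∃ m : ℕ, P = eOn (varsFrom n k) m)}

lemma eOn_mem (m : ℕ) : eOn (varsFrom n k) m ∈ Subring.closure (Sgen n k) :=
  Subring.subset_closure (Or.inr ⟨m, rfl⟩)

lemma eZ_mem (z : ℤ) : eZ (varsFrom n k) z ∈ Subring.closure (Sgen n k) := by
  unfold eZ
  split
  · exact eOn_mem _
  · exact zero_mem _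

lemma X_mem {a : Fin n} (h : a.val < k) : (X a : R n) ∈ Subring.closure (Sgen n k) :=
  Subring.subset_closure (Or.inl ⟨a, h, rfl⟩)

lemma closure_symFrom {P : R n} (h : P ∈ Subring.closure (Sgen n k)) : SymFrom k P := by
  induction h using Subring.closure_induction with
  | mem x hx =>
    rcases hx with ⟨a, ha, rfl⟩ | ⟨m, rfl⟩
    · exact symFrom_X ha
    · exact symFrom_eOn le_rfl m
  | zero => exact symFrom_zero k
  | one => exact symFrom_one k
  | add x y _ _ hx hy => exact symFrom_add hx hy
  | neg x _ hx => exact symFrom_neg hx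
  | mul x y _ _ hx hy => exact symFrom_mul hx hy

/-- membership in the span of powers `X_k^0 … X_k^{n-k-1}` with closure coefficients -/
def InSpan (n k : ℕ) (hk : k < n) (Q : R n) : Prop :=
  ∃ c : ℕ → R n, (∀ i, c i ∈ Subring.closure (Sgen n k)) ∧
    Q = ∑ i ∈ Finset.range (n - k), c i * (X (⟨k, hk⟩ : Fin n)) ^ i

lemma inSpan_closure {hk : k < n} {Q : R n} (h : Q ∈ Subring.closure (Sgen n k)) :
    InSpan n k hk Q := by
  refine ⟨fun i => if i = 0 then Q else 0, fun i => by
    dsimp only; split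
    · exact h
    · exact zero_mem _, ?_⟩
  rw [Finset.sum_eq_single 0]
  · simp
  · intro b _ hb; simp [hb]
  · intro h0; exfalso; rw [Finset.mem_range] at h0; omega

lemma inSpan_add {hk : k < n} {Q1 Q2 : R n} (h1 : InSpan n k hk Q1) (h2 : InSpan n k hk Q2) :
    InSpan n k hk (Q1 + Q2) := by
  obtain ⟨c1, hc1, rfl⟩ := h1
  obtain ⟨c2, hc2, rfl⟩ := h2
  exact ⟨fun i => c1 i + c2 i, fun i => add_mem (hc1 i) (hc2 i), by
    rw [← Finset.sum_add_distrib]; apply Finset.sum_congr rfl; intro i _; ring⟩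

lemma inSpan_smul {hk : k < n} {s Q : R n} (hs : s ∈ Subring.closure (Sgen n k))
    (h : InSpan n k hk Q) : InSpan n k hk (s * Q) := by
  obtain ⟨c, hc, rfl⟩ := h
  exact ⟨fun i => s * c i, fun i => mul_mem hs (hc i), by
    rw [Finset.mul_sum]; apply Finset.sum_congr rfl; intro i _; ring⟩

lemma inSpan_sum {hk : k < n} {ι : Type*} (t : Finset ι) (f : ι → R n)
    (h : ∀ i ∈ t, InSpan n k hk (f i)) : InSpan n k hk (∑ i ∈ t, f i) := by
  classical
  induction t using Finset.induction with
  | empty => simpa using inSpan_closure (zero_mem _)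
  | insert _ _ hj ih =>
    rw [Finset.sum_insert hj]
    exact inSpan_add (h _ (Finset.mem_insert_self _ _))
      (ih fun i hi => h i (Finset.mem_insert_of_mem hi))

lemma xpow_mem (hk : k < n) : ∀ j : ℕ, InSpan n k hk ((X (⟨k, hk⟩ : Fin n)) ^ j) := by
  intro j
  induction j using Nat.strong_induction_on with
  | _ j ih =>
    rcases lt_or_ge j (n - k) with hj | hj
    · refine ⟨fun i => if i = j then 1 else 0, fun i => by
        dsimp only; split
        · exact one_mem _
        · exact zero_mem _, ?_⟩
      rw [Finset.sum_eq_single j]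
      · simp
      · intro b _ hb; simp [hb]
      · intro h0; exfalso; rw [Finset.mem_range] at h0; omega
    · -- use the Vieta relation
      set N := n - k with hN
      have hNpos : 1 ≤ N := by omega
      have hcard : (varsFrom n k).card = N := varsFrom_card N k (by omega)
      have hmem : (⟨k, hk⟩ : Fin n) ∈ varsFrom n k := mem_varsFrom.2 (by simp)
      have hprod : ∏ a ∈ varsFrom n k, ((X (⟨k, hk⟩ : Fin n) : R n) - X a) = 0 :=
        Finset.prod_eq_zero hmem
          (by show (X (⟨k, hk⟩ : Fin n) : R n) - X ⟨k, hk⟩ = 0; exact sub_self _)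
      have hvieta := vieta (varsFrom n k) (X (⟨k, hk⟩ : Fin n))
      rw [hprod, hcard] at hvieta
      have hsplit := Finset.sum_range_succ' (fun m => (-1 : R n) ^ m * eZ (varsFrom n k) m
        * (X (⟨k, hk⟩ : Fin n)) ^ (N - m)) N
      rw [hsplit] at hvieta
      have h0 : (-1 : R n) ^ 0 * eZ (varsFrom n k) ((0:ℕ) : ℤ)
          * (X (⟨k, hk⟩ : Fin n)) ^ (N - 0) = (X (⟨k, hk⟩ : Fin n)) ^ N := by
        rw [pow_zero, one_mul, Nat.sub_zero]
        rw [show ((0:ℕ):ℤ) = 0 from rfl, eZ_zero, one_mul]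
      rw [h0] at hvieta
      have hxN : (X (⟨k, hk⟩ : Fin n)) ^ N
          = ∑ m ∈ Finset.range N, -((-1 : R n) ^ (m+1) * eZ (varsFrom n k) ((m+1 : ℕ))
              * (X (⟨k, hk⟩ : Fin n)) ^ (N - (m+1))) := by
        rw [Finset.sum_neg_distrib]
        linear_combination -hvieta
      have hxj : (X (⟨k, hk⟩ : Fin n)) ^ j
          = ∑ m ∈ Finset.range N, (-((-1 : R n) ^ (m+1) * eZ (varsFrom n k) ((m+1 : ℕ))))
              * (X (⟨k, hk⟩ : Fin n)) ^ (j - (m+1)) := by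
        have : ((X (⟨k, hk⟩ : Fin n) : R n)) ^ j
            = (X (⟨k, hk⟩ : Fin n)) ^ (j - N) * (X (⟨k, hk⟩ : Fin n)) ^ N := by
          rw [← pow_add]
          congr 1
          omega
        rw [this, hxN, Finset.mul_sum]
        apply Finset.sum_congr rfl
        intro m hm
        have hm' : m < N := Finset.mem_range.1 hm
        have : ((X (⟨k, hk⟩ : Fin n) : R n)) ^ (j - N) * (X (⟨k, hk⟩ : Fin n)) ^ (N - (m+1))
            = (X (⟨k, hk⟩ : Fin n)) ^ (j - (m+1)) := by
          rw [← pow_add]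
          congr 1
          omega
        rw [← this]
        ring
      rw [hxj]
      apply inSpan_sum
      intro m hm
      have hm' : m < N := Finset.mem_range.1 hm
      apply inSpan_smul
      · apply neg_mem
        apply mul_mem
        · apply pow_mem
          exact neg_mem (one_mem _)
        · exact eZ_mem _
      · exact ih (j - (m+1)) (by omega)

lemma inSpan_mul_xpow {hk : k < n} {Q : R n} (p : ℕ) (h : InSpan n k hk Q) :
    InSpan n k hk ((X (⟨k, hk⟩ : Fin n)) ^ p * Q) := by
  obtain ⟨c, hc, rfl⟩ := h
  rw [Finset.mul_sum]
  apply inSpan_sum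
  intro i _
  have : (X (⟨k, hk⟩ : Fin n)) ^ p * (c i * (X (⟨k, hk⟩ : Fin n)) ^ i)
      = c i * (X (⟨k, hk⟩ : Fin n)) ^ (p + i) := by
    rw [pow_add]; ring
  rw [this]
  exact inSpan_smul (hc i) (xpow_mem hk (p+i))

lemma inSpan_mul {hk : k < n} {Q1 Q2 : R n} (h1 : InSpan n k hk Q1) (h2 : InSpan n k hk Q2) :
    InSpan n k hk (Q1 * Q2) := by
  obtain ⟨c, hc, rfl⟩ := h1
  rw [Finset.sum_mul]
  apply inSpan_sum
  intro i _
  have : c i * (X (⟨k, hk⟩ : Fin n)) ^ i * Q2 = c i * ((X (⟨k, hk⟩ : Fin n)) ^ i * Q2) := by ring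
  rw [this]
  exact inSpan_smul (hc i) (inSpan_mul_xpow i h2)

/-- every element of the level-(k+1) closure is in the span over the level-k closure -/
lemma closure_step (hk : k < n) {P : R n} (hP : P ∈ Subring.closure (Sgen n (k+1))) :
    InSpan n k hk P := by
  induction hP using Subring.closure_induction with
  | mem x hx =>
    rcases hx with ⟨a, ha, rfl⟩ | ⟨m, rfl⟩
    · rcases lt_or_ge a.val k with h | h
      · exact inSpan_closure (X_mem h)
      · have hak : a = ⟨k, hk⟩ := by
          apply Fin.ext; show a.val = k; omega
        subst hak
        have := xpow_mem hk 1
        rwa [pow_one] at this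
    · -- e_m of the smaller block
      have hxv : (⟨k, hk⟩ : Fin n) ∉ varsFrom n (k+1) := by simp [mem_varsFrom]
      have hins : insert (⟨k, hk⟩ : Fin n) (varsFrom n (k+1)) = varsFrom n k :=
        (varsFrom_insert hk).symm
      rw [eInv hxv m]
      apply inSpan_sum
      intro u _
      have : (-1 : R n) ^ u * (X (⟨k, hk⟩ : Fin n)) ^ u
            * eZ (insert (⟨k, hk⟩ : Fin n) (varsFrom n (k+1))) ((m:ℤ) - u)
          = ((-1 : R n) ^ u * eZ (varsFrom n k) ((m:ℤ) - u))
            * (X (⟨k, hk⟩ : Fin n)) ^ u := by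
        rw [hins]; ring
      rw [this]
      refine inSpan_smul (mul_mem (pow_mem (neg_mem (one_mem _)) u) (eZ_mem _)) ?_
      exact xpow_mem hk u
  | zero => exact inSpan_closure (zero_mem _)
  | one => exact inSpan_closure (one_mem _)
  | add x y _ _ hx hy => exact inSpan_add hx hy
  | neg x _ hx =>
    have : (-x : R n) = (-1) * x := by ring
    rw [this]
    exact inSpan_smul (neg_mem (one_mem _)) hx
  | mul x y _ _ hx hy => exact inSpan_mul hx hy

lemma all_mem_top : ∀ P : R n, P ∈ Subring.closure (Sgen n n) := by
  intro P
  induction P using MvPolynomial.induction_on with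
  | C a =>
    rw [show (C a : R n) = ((a : ℤ) : R n) from (eq_intCast (C : ℤ →+* R n) a).symm]
    exact intCast_mem _ a
  | add p q hp hq => exact add_mem hp hq
  | mul_X p a hp => exact mul_mem hp (X_mem a.isLt)

/-- fundamental structure theorem, by downward induction -/
lemma FT : ∀ t k, k + t = n → ∀ P : R n, SymFrom k P → P ∈ Subring.closure (Sgen n k) := by
  intro t
  induction t with
  | zero =>
    intro k hk P _
    have : k = n := by omega
    subst this
    exact all_mem_top P
  | succ t ih =>
    intro k hk P hP
    have hkn : k < n := by omega
    have hP1 : SymFrom (k+1) P := fun a b ha hb => hP a b (by omega) (by omega)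
    obtain ⟨c, hc, hsum⟩ := closure_step hkn (ih (k+1) (by omega) P hP1)
    -- apply the swaps and Vandermonde
    have hswap : ∀ b : Fin n, k ≤ b.val →
        ∑ i ∈ Finset.range (n - k), c i * (X b : R n) ^ i = P := by
      intro b hb
      have hre := hP ⟨k, hkn⟩ b (le_refl k) hb
      rw [hsum, map_sum] at hre
      have hterm : ∀ i ∈ Finset.range (n - k),
          rename (⇑(Equiv.swap (⟨k, hkn⟩ : Fin n) b)) (c i * X ⟨k, hkn⟩ ^ i)
            = c i * (X b : R n) ^ i := by
        intro i _
        rw [map_mul, map_pow, rename_X, Equiv.swap_apply_left,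
          closure_symFrom (hc i) ⟨k, hkn⟩ b (le_refl k) hb]
      rw [← Finset.sum_congr rfl hterm, hre, ← hsum]
    set d : Fin (n - k) → R n := fun i => if (i : ℕ) = 0 then c 0 - P else c (i : ℕ) with hd
    have hNpos : 0 < n - k := by omega
    have hzero : ∀ b : Fin n, k ≤ b.val →
        ∑ i : Fin (n - k), d i * (X b : R n) ^ (i : ℕ) = 0 := by
      intro b hb
      have h2 : ∀ i : Fin (n - k), d i * (X b : R n) ^ (i : ℕ)
          = c (i : ℕ) * (X b : R n) ^ (i : ℕ)
            + (if i = (⟨0, hNpos⟩ : Fin (n - k)) then -P else 0) := by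
        intro i
        by_cases hi : i = (⟨0, hNpos⟩ : Fin (n - k))
        · subst hi
          simp only [hd, if_pos rfl, if_pos]
          rw [pow_zero]
          ring
        · have hi' : (i : ℕ) ≠ 0 := by
            intro h0
            exact hi (Fin.ext h0)
          simp only [hd, if_neg hi', if_neg hi]
          ring
      rw [Finset.sum_congr rfl (fun i _ => h2 i), Finset.sum_add_distrib,
        Finset.sum_ite_eq' Finset.univ (⟨0, hNpos⟩ : Fin (n - k)) (fun _ => (-P : R n))]
      have h3 : ∑ i : Fin (n - k), c (i : ℕ) * (X b : R n) ^ (i : ℕ) = P := by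
        rw [← Finset.sum_range (fun i => c i * (X b : R n) ^ i)]
        exact hswap b hb
      rw [h3]
      simp
    have hdz := vandermonde_kill hkn d hzero
    have hc0 : c 0 = P := by
      have := hdz ⟨0, hNpos⟩
      simp only [hd] at this
      exact sub_eq_zero.1 this
    rw [← hc0]
    exact hc 0


lemma symFrom_neg_one_pow (k t : ℕ) : SymFrom k ((-1 : R n) ^ t) := by
  intro a b _ _
  rw [map_pow, map_neg, map_one]

end Dem8

open Dem Dem8 MvPolynomial in
open Dem in
/-- Let `D = ∂_{s_{n-1} ⋯ s_{i+1}}` (paper 1-based indexing;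
`0 ≤ i ≤ n-1`, `D = id` for `i = n-1`). Then
(1) `D` maps polynomials symmetric in `X_{i+2},…,X_n` to polynomials symmetric
in `X_{i+1},…,X_n`;
(2) the powers `X_{i+1}^0, …, X_{i+1}^{n-i-1}` form a basis of the former ring
over the latter;
(3) `D(X_{i+1}^j · e_m(X_{i+2},…,X_n)) = (-1)^j` if `j + m = n-i-1` and `= 0`
otherwise (for `0 ≤ j, m ≤ n-i-1`). -/
theorem statement8 (n : ℕ) (hn : 2 ≤ n) (i : ℕ) (hi : i + 1 ≤ n)
    (D : ℕ → R n → R n) (hD : IsDemFamily D) :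
    (∀ P : R n, SymFrom (i + 1) P →
      SymFrom i (applyWord D ((List.range (n - 1 - i)).reverse.map (· + i)) P)) ∧
    (∀ P : R n, SymFrom (i + 1) P →
      ∃ c : Fin (n - i) → R n, (∀ j, SymFrom i (c j)) ∧
        P = ∑ j : Fin (n - i), c j * MvPolynomial.X (⟨i, by omega⟩ : Fin n) ^ (j : ℕ)) ∧
    (∀ c : Fin (n - i) → R n, (∀ j, SymFrom i (c j)) →
      ∑ j : Fin (n - i), c j * MvPolynomial.X (⟨i, by omega⟩ : Fin n) ^ (j : ℕ) = 0 →
      ∀ j, c j = 0) ∧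
    (∀ j m : ℕ, j ≤ n - i - 1 → m ≤ n - i - 1 →
      applyWord D ((List.range (n - 1 - i)).reverse.map (· + i))
          (MvPolynomial.X (⟨i, by omega⟩ : Fin n) ^ j * eOn (varsFrom n (i + 1)) m)
        = if j + m = n - i - 1 then MvPolynomial.C ((-1 : ℤ) ^ j) else 0) := by
  have hin : i < n := by omega
  have hwd : (List.range (n - 1 - i)).reverse.map (· + i) = word n i := rfl
  have hw0 : ∀ l ∈ word n i, l + 1 < n := fun l hl => (mem_word hl).2
  set t : ℕ := n - 1 - i with ht
  -- existence of the expansion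
  have hexist : ∀ P : R n, SymFrom (i + 1) P →
      ∃ c : Fin (n - i) → R n, (∀ j, SymFrom i (c j)) ∧
        P = ∑ j : Fin (n - i), c j * X (⟨i, hin⟩ : Fin n) ^ (j : ℕ) := by
    intro P hP
    have h1 : P ∈ Subring.closure (Sgen n (i + 1)) :=
      FT (n - (i + 1)) (i + 1) (by omega) P hP
    obtain ⟨c, hc, hsum⟩ := closure_step hin h1
    refine ⟨fun j => c j, fun j => closure_symFrom (hc j), ?_⟩
    rw [hsum, Finset.sum_range (fun p => c p * X (⟨i, hin⟩ : Fin n) ^ p)]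
  -- the value of D on powers of X_i
  have hxj : ∀ j : Fin (n - i), applyWord D (word n i) ((X (⟨i, hin⟩ : Fin n) : R n) ^ (j : ℕ))
      = (-1 : R n) ^ t * hZ (varsFrom n i) (((j : ℕ) : ℤ) - t) := by
    intro j
    have hcl := claim hD t i (by omega) (j : ℕ) 0
    rw [eOn_zero, mul_one, Finset.range_one, Finset.sum_singleton] at hcl
    rw [hcl]
    congr 1
    have e1 : ((0:ℕ):ℤ) - ((0:ℕ):ℤ) = 0 := by norm_num
    rw [e1, eZ_zero]
    have e2 : ((j:ℕ):ℤ) + ((0:ℕ):ℤ) - (t:ℤ) = ((j:ℕ):ℤ) - t := by push_cast; ring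
    rw [e2]
    ring
  refine ⟨?_, ?_, ?_, ?_⟩
  · -- part 1
    intro P hP
    obtain ⟨c, hc, hPe⟩ := hexist P hP
    rw [hwd, hPe, aw_sum hD hw0]
    apply symFrom_sum
    intro j _
    have hpull : applyWord D (word n i) (c j * (X (⟨i, hin⟩ : Fin n) : R n) ^ (j : ℕ))
        = c j * applyWord D (word n i) ((X (⟨i, hin⟩ : Fin n) : R n) ^ (j : ℕ)) := by
      apply aw_pull hD hw0
      intro l hl hmem
      exact hc j ⟨l, by omega⟩ ⟨l+1, hl⟩ (by show i ≤ l; exact (mem_word hmem).1)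
        (by show i ≤ l + 1; have := (mem_word hmem).1; omega)
    rw [hpull, hxj j]
    apply symFrom_mul (hc j)
    have hjt : ((j : ℕ) : ℤ) - t < 0 ∨ ((j : ℕ) : ℤ) - t = 0 := by
      have := j.isLt
      omega
    rcases hjt with h | h
    · rw [hZ_neg h, mul_zero]
      exact symFrom_zero i
    · rw [h, hZ_zero, mul_one]
      exact symFrom_neg_one_pow i t
  · -- part 2 existence
    intro P hP
    exact hexist P hP
  · -- part 2 uniqueness
    intro c hc hsum0
    apply vandermonde_kill hin c
    intro b hb
    have hre := congrArg (rename (⇑(Equiv.swap (⟨i, hin⟩ : Fin n) b))) hsum0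
    rw [map_sum, map_zero] at hre
    rw [← hre]
    apply Finset.sum_congr rfl
    intro j _
    rw [map_mul, map_pow, rename_X, Equiv.swap_apply_left,
      hc j ⟨i, hin⟩ b (le_refl i) hb]
  · -- part 3
    intro j m hj hm
    have hj' : j ≤ t := by omega
    have hm' : m ≤ t := by omega
    rw [hwd]
    have hcl := claim hD t i (by omega) j m
    rw [hcl]
    rcases lt_trichotomy (j + m) t with hlt | heq | hgt
    · rw [if_neg (by omega)]
      have hz : ∑ u ∈ Finset.range (m+1), (-1 : R n) ^ u * eZ (varsFrom n i) ((m:ℤ) - u)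
          * hZ (varsFrom n i) ((j:ℤ) + u - t) = 0 := by
        apply Finset.sum_eq_zero
        intro u hu
        have hu' : u < m + 1 := Finset.mem_range.1 hu
        rw [hZ_neg (by omega)]
        ring
      rw [hz, mul_zero]
    · rw [if_pos (by omega)]
      rw [Finset.sum_range_succ]
      have hz : ∑ u ∈ Finset.range m, (-1 : R n) ^ u * eZ (varsFrom n i) ((m:ℤ) - u)
          * hZ (varsFrom n i) ((j:ℤ) + u - t) = 0 := by
        apply Finset.sum_eq_zero
        intro u hu
        have hu' : u < m := Finset.mem_range.1 hu
        rw [hZ_neg (by omega)]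
        ring
      rw [hz, zero_add]
      have e1 : (m:ℤ) - (m:ℤ) = 0 := by ring
      have e2 : (j:ℤ) + (m:ℤ) - (t:ℤ) = 0 := by omega
      rw [e1, e2, eZ_zero, hZ_zero]
      have hC : (C ((-1 : ℤ) ^ j) : R n) = (-1 : R n) ^ j := by
        rw [map_pow, map_neg, map_one]
      rw [hC]
      have h1 : t + m = j + 2*m := by omega
      rw [mul_one, mul_one, ← pow_add, h1, pow_add, pow_mul, neg_one_sq, one_pow, mul_one]
    · rw [if_neg (by omega)]
      set D0 : ℕ := j + m - t with hD0
      have hD01 : 1 ≤ D0 := by omega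
      have hD0m : D0 ≤ m := by omega
      have hrefl := Finset.sum_range_reflect (fun u => (-1 : R n) ^ u
        * eZ (varsFrom n i) ((m:ℤ) - u) * hZ (varsFrom n i) ((j:ℤ) + u - t)) (m+1)
      rw [← hrefl]
      have hcongr : ∀ v ∈ Finset.range (m+1),
          (-1 : R n) ^ (m + 1 - 1 - v) * eZ (varsFrom n i) ((m:ℤ) - ↑(m + 1 - 1 - v))
            * hZ (varsFrom n i) ((j:ℤ) + ↑(m + 1 - 1 - v) - t)
          = (-1 : R n) ^ m * ((-1 : R n) ^ v * eZ (varsFrom n i) ((v:ℕ) : ℤ)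
            * hZ (varsFrom n i) (((D0:ℕ) : ℤ) - v)) := by
        intro v hv
        have hv' : v < m + 1 := Finset.mem_range.1 hv
        have e1 : m + 1 - 1 - v = m - v := by omega
        have e2 : (m:ℤ) - ↑(m - v) = ((v:ℕ) : ℤ) := by omega
        have e3 : (j:ℤ) + ↑(m - v) - t = ((D0:ℕ) : ℤ) - v := by omega
        rw [e1, e2, e3]
        have h2v : ((-1 : R n)) ^ (2 * v) = 1 := by
          rw [pow_mul, neg_one_sq, one_pow]
        have hsgn : ((-1 : R n)) ^ (m - v) = (-1 : R n) ^ m * (-1 : R n) ^ v := by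
          calc ((-1 : R n)) ^ (m - v) = (-1 : R n) ^ (m - v) * (-1 : R n) ^ (2 * v) := by
                rw [h2v, mul_one]
            _ = (-1 : R n) ^ (m - v + 2 * v) := by rw [pow_add]
            _ = (-1 : R n) ^ (m + v) := by congr 1; omega
            _ = (-1 : R n) ^ m * (-1 : R n) ^ v := by rw [pow_add]
        rw [hsgn]
        ring
      rw [Finset.sum_congr rfl hcongr, ← Finset.mul_sum]
      have htr : ∑ v ∈ Finset.range (m+1), (-1 : R n) ^ v * eZ (varsFrom n i) ((v:ℕ) : ℤ)
            * hZ (varsFrom n i) (((D0:ℕ) : ℤ) - v)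
          = ∑ v ∈ Finset.range (D0+1), (-1 : R n) ^ v * eZ (varsFrom n i) ((v:ℕ) : ℤ)
            * hZ (varsFrom n i) (((D0:ℕ) : ℤ) - v) := by
        symm
        apply Finset.sum_subset (Finset.range_subset_range.2 (by omega))
        intro v hv hnv
        have h1 : D0 + 1 ≤ v := by simpa using hnv
        rw [hZ_neg (by omega)]
        ring
      rw [htr, alt_eh (varsFrom n i) D0 hD01]
      ring
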